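/- The suffixes of any string are totally V-ordered by increasing length: for any string x = x[1..n] over Σ and any indices 1 ≤ i < j ≤ n, the suffix x[j..n] satisfies x[j..n] ≺ x[i..n] in V-order; in particular x[n] ≺ x[n−1..n] ≺ ⋯ ≺ x. -/

import Mathlib

variable {α : Type*} [LinearOrder α]

/-- The star operation on strings: delete the letter `x_h`, where `h` is the
start of the longest non-decreasing suffix (so `h = 1` iff the whole string is
non-decreasing, and otherwise `x_{h-1} > x_h ≤ x_{h+1} ≤ ⋯ ≤ x_n`). -/
def vstar : List α → List α
  | [] => []
  | a :: t => if List.IsChain (· ≤ ·) (a :: t) then t else a :: vstar t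

theorem vstar_of_chain {l : List α} (h : List.IsChain (· ≤ ·) l) : vstar l = l.tail := by
  cases l with
  | nil => rfl
  | cons a t => simp [vstar, h]
theorem vstar_cons_of_not_chain {a : α} {t : List α} (h : ¬ List.IsChain (· ≤ ·) (a :: t)) :
    vstar (a :: t) = a :: vstar t := by simp [vstar, h]
theorem length_vstar (l : List α) : (vstar l).length = l.length - 1 := by
  induction l with
  | nil => rfl
  | cons a t ih =>
    by_cases h : List.IsChain (· ≤ ·) (a :: t)
    · simp [vstar, h]
    · rw [vstar_cons_of_not_chain h]
      cases t with
      | nil => exact absurd (by simp) h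
      | cons b r => simp at ih ⊢; omega
theorem length_vstar_iter (k : ℕ) (l : List α) : (vstar^[k] l).length = l.length - k := by
  induction k generalizing l with
  | zero => simp
  | succ n ih => rw [Function.iterate_succ_apply', length_vstar, ih]; omega
theorem chain_vstar {l : List α} (h : List.IsChain (· ≤ ·) l) : List.IsChain (· ≤ ·) (vstar l) := by
  rw [vstar_of_chain h]; exact h.tail
theorem vstar_iter_of_chain {l : List α} (h : List.IsChain (· ≤ ·) l) (j : ℕ) :
    vstar^[j] l = l.drop j := by
  induction j with
  | zero => simp
  | succ n ih =>
    rw [Function.iterate_succ_apply', ih, vstar_of_chain (h.drop n), List.tail_drop]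
theorem chain_vstar_iter_le {l : List α} {i j : ℕ} (hij : i ≤ j)
    (h : List.IsChain (· ≤ ·) (vstar^[i] l)) : List.IsChain (· ≤ ·) (vstar^[j] l) := by
  obtain ⟨d, rfl⟩ := Nat.exists_eq_add_of_le hij
  rw [Nat.add_comm, Function.iterate_add_apply]
  induction d with
  | zero => exact h
  | succ n ih => rw [Function.iterate_succ_apply']; exact chain_vstar (ih (by omega))
theorem head_lt_of_not_chain {a : α} {s : List α} (h : ¬ List.IsChain (· ≤ ·) (a :: s))
    (hs : List.IsChain (· ≤ ·) s) : ∃ b t, s = b :: t ∧ b < a := by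
  cases s with
  | nil => exact absurd (by simp) h
  | cons b t =>
    refine ⟨b, t, rfl, ?_⟩
    by_contra hab
    push_neg at hab
    exact h (hs.cons_cons hab)
theorem vstar_iter_cons (a : α) (t : List α) (j : ℕ)
    (h : ∀ i < j, ¬ List.IsChain (· ≤ ·) (vstar^[i] (a :: t))) :
    vstar^[j] (a :: t) = a :: vstar^[j] t := by
  induction j with
  | zero => simp
  | succ n ih =>
    have hn : vstar^[n] (a :: t) = a :: vstar^[n] t := ih (fun i hi => h i (by omega))
    rw [Function.iterate_succ_apply', Function.iterate_succ_apply', hn,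
      vstar_cons_of_not_chain (by rw [← hn]; exact h n (by omega))]

/-- The key combinatorial lemma pair (F and E). -/
theorem vstar_EF : ∀ y : List α,
    (∀ m : ℕ, vstar^[m+1] y = y.drop (m+1) → List.IsChain (· ≤ ·) (vstar^[m] y)) ∧
    (∀ m : ℕ, ∀ b : α, List.IsChain (· ≤ ·) (vstar^[m] y) →
      vstar^[m] y = b :: y.drop (m+1) → ∀ h : m < y.length, y[m] ≤ b) := by
  intro y
  induction y with
  | nil =>
    constructor
    · intro m _; simp [Function.iterate_fixed (show vstar ([]:List α) = [] from rfl)]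
    · intro m b _ _ h; simp at h
  | cons a t iht =>
    obtain ⟨Ft, Et⟩ := iht
    constructor
    · -- F
      intro m H
      by_contra hnc
      have hnotall : ∀ i ≤ m, ¬ List.IsChain (· ≤ ·) (vstar^[i] (a :: t)) :=
        fun i hi hch => hnc (chain_vstar_iter_le hi hch)
      have hcons : ∀ j ≤ m + 1, vstar^[j] (a :: t) = a :: vstar^[j] t :=
        fun j hj => vstar_iter_cons a t j (fun i hi => hnotall i (by omega))
      rw [hcons (m+1) le_rfl] at H
      have hd : (a :: t).drop (m+1) = t.drop m := by simp
      rw [hd] at H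
      -- H : a :: vstar^[m+1] t = t.drop m
      have hmlt : m < t.length := by
        have := congrArg List.length H
        simp [length_vstar_iter] at this
        omega
      rw [List.drop_eq_getElem_cons hmlt, List.cons_eq_cons] at H
      obtain ⟨hta, hvt⟩ := H
      have hta : t[m] = a := hta.symm
      have hFt := Ft m hvt
      -- vstar^[m] t = b' :: t.drop (m+1)
      have hlen : (vstar^[m] t).length = t.length - m := length_vstar_iter m t
      obtain ⟨b', rest, hbr⟩ : ∃ b' rest, vstar^[m] t = b' :: rest := by
        cases hvm : vstar^[m] t with
        | nil => rw [hvm] at hlen; simp at hlen; omega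
        | cons x r => exact ⟨x, r, rfl⟩
      have hrest : rest = t.drop (m+1) := by
        have h1 : vstar (vstar^[m] t) = vstar^[m+1] t := (Function.iterate_succ_apply' vstar m t).symm
        rw [vstar_of_chain hFt, hbr] at h1
        simpa [hvt] using h1
      have htb' : t[m] ≤ b' := Et m b' hFt (by rw [hbr, hrest]) hmlt
      -- now vstar^[m] (a::t) = a :: b' :: rest is a chain: contradiction
      apply hnotall m le_rfl
      rw [hcons m (by omega), hbr]
      refine List.IsChain.cons_cons ?_ (by rw [← hbr]; exact hFt)
      exact hta ▸ htb'
    · -- E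
      intro m b hch hshape h
      cases m with
      | zero =>
        simp only [Function.iterate_zero, id_eq, List.drop_succ_cons, List.drop_zero] at hshape
        rw [List.cons_eq_cons] at hshape
        obtain ⟨hba, -⟩ := hshape
        simp [← hba]
      | succ n =>
        have hd : (a :: t).drop (n+2) = t.drop (n+1) := by simp
        rw [hd] at hshape
        by_cases hex : ∃ j, j ≤ n ∧ List.IsChain (· ≤ ·) (vstar^[j] (a :: t))
        · -- least such j
          classical
          obtain ⟨jw, hjw, hjc⟩ := hex
          let P := fun j => List.IsChain (· ≤ ·) (vstar^[j] (a :: t))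
          have hP : ∃ j, P j := ⟨jw, hjc⟩
          set j₀ := Nat.find hP with hj0def
          have hj0 : P j₀ := Nat.find_spec hP
          have hj0min : ∀ i < j₀, ¬ P i := fun i hi => Nat.find_min hP hi
          have hj0le : j₀ ≤ n := le_trans (Nat.find_min' hP hjc) hjw
          have hW : vstar^[j₀] (a :: t) = a :: vstar^[j₀] t := vstar_iter_cons a t j₀ hj0min
          have hWch : List.IsChain (· ≤ ·) (a :: vstar^[j₀] t) := by rw [← hW]; exact hj0
          have hW'ch : List.IsChain (· ≤ ·) (vstar^[j₀] t) := hWch.tail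
          have hkey : vstar^[n+1] (a :: t) = vstar^[n] t := by
            have e1 : vstar^[n+1] (a :: t) = vstar^[n+1-j₀] (vstar^[j₀] (a :: t)) := by
              rw [← Function.iterate_add_apply]
              congr 1
              omega
            rw [e1, hW, vstar_iter_of_chain hWch]
            have e2 : (a :: vstar^[j₀] t).drop (n+1-j₀) = (vstar^[j₀] t).drop (n-j₀) := by
              have : n + 1 - j₀ = (n - j₀) + 1 := by omega
              rw [this]
              simp
            rw [e2, ← vstar_iter_of_chain hW'ch, ← Function.iterate_add_apply]
            congr 1
            omega
          rw [hkey] at hshape hch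
          have hnlt : n < t.length := by
            have := congrArg List.length hshape
            simp [length_vstar_iter] at this
            omega
          have := Et n b hch hshape hnlt
          simpa using this
        · push_neg at hex
          have hcons : ∀ j ≤ n + 1, vstar^[j] (a :: t) = a :: vstar^[j] t :=
            fun j hj => vstar_iter_cons a t j (fun i hi => hex i (by omega))
          rw [hcons (n+1) le_rfl, List.cons_eq_cons] at hshape
          obtain ⟨hba, hvt⟩ := hshape
          have hba : b = a := hba.symm
          have hFt := Ft n hvt
          have hnlt : n < t.length := by
            have hlen := length_vstar_iter (n+1) (a::t)
            rw [hcons (n+1) le_rfl] at hlen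
            simp at hlen h ⊢
            omega
          -- vstar^[n] t = b₂ :: t.drop (n+1)
          have hlen2 : (vstar^[n] t).length = t.length - n := length_vstar_iter n t
          obtain ⟨b₂, rest, hbr⟩ : ∃ b₂ rest, vstar^[n] t = b₂ :: rest := by
            cases hvm : vstar^[n] t with
            | nil => rw [hvm] at hlen2; simp at hlen2; omega
            | cons x r => exact ⟨x, r, rfl⟩
          have hrest : rest = t.drop (n+1) := by
            have h1 : vstar (vstar^[n] t) = vstar^[n+1] t := (Function.iterate_succ_apply' vstar n t).symm
            rw [vstar_of_chain hFt, hbr] at h1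
            simpa [hvt] using h1
          have htb2 : t[n] ≤ b₂ := Et n b₂ hFt (by rw [hbr, hrest]) hnlt
          -- b₂ < a from not-chain at level n
          have hnch : ¬ List.IsChain (· ≤ ·) (a :: vstar^[n] t) := by
            rw [← hcons n (by omega)]
            exact hex n le_rfl
          obtain ⟨b₂', t₂', heq, hlt⟩ := head_lt_of_not_chain hnch hFt
          rw [hbr] at heq
          have hb2 : b₂' = b₂ := by injection heq.symm
          rw [hba]
          simp only [List.getElem_cons_succ]
          exact le_of_lt (lt_of_le_of_lt htb2 (hb2 ▸ hlt))

theorem vstar_append_of_not_chain {u : List α} (w : List α) (h : ¬ List.IsChain (· ≤ ·) u) :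
    vstar (w ++ u) = w ++ vstar u := by
  induction w with
  | nil => simp
  | cons p w' ih =>
    have hnc : ¬ List.IsChain (· ≤ ·) (p :: (w' ++ u)) := by
      intro hch
      exact h (hch.suffix ⟨p :: w', rfl⟩)
    rw [List.cons_append, vstar_cons_of_not_chain hnc, ih, List.cons_append]

theorem vstar_append_boundary : ∀ (P : List α), ∀ {A : List α},
    List.IsChain (· ≤ ·) A →
    (∃ x h, P.getLast? = some x ∧ A.head? = some h ∧ h < x) →
    vstar (P ++ A) = P ++ vstar A := by
  intro P
  induction P with
  | nil => intro A _ hx; obtain ⟨x, h, hx1, _, _⟩ := hx; simp at hx1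
  | cons p P' ih =>
    intro A hchA ⟨x, h, hx1, hh1, hlt⟩
    cases P' with
    | nil =>
      simp at hx1
      cases A with
      | nil => simp at hh1
      | cons a0 A' =>
        simp at hh1
        have hnc : ¬ List.IsChain (· ≤ ·) (p :: a0 :: A') := by
          intro hch
          rcases List.isChain_cons_cons.mp hch with ⟨hpa, _⟩
          subst hx1 hh1
          exact absurd hpa (not_le.mpr hlt)
        simpa using vstar_cons_of_not_chain hnc
    | cons q P'' =>
      have hx1' : (q :: P'').getLast? = some x := by simpa using hx1
      have hnc : ¬ List.IsChain (· ≤ ·) ((p :: q :: P'') ++ A) := by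
        intro hch
        rw [List.isChain_append] at hch
        have := hch.2.2 x (by simpa using hx1) h hh1
        exact absurd this (not_le.mpr hlt)
      rw [List.cons_append, vstar_cons_of_not_chain (by simpa using hnc),
        ih hchA ⟨x, h, hx1', hh1, hlt⟩, List.cons_append]
      simp

theorem vstar_append_w : ∀ (P : List α), ∀ {A : List α}, A ≠ [] →
    List.IsChain (· ≤ ·) A →
    (∃ x h, P.getLast? = some x ∧ A.head? = some h ∧ x ≤ h) →
    vstar (P ++ A) = vstar P ++ A := by
  intro P
  induction P with
  | nil => intro A _ _ hx; obtain ⟨x, h, hx1, _, _⟩ := hx; simp at hx1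
  | cons p P' ih =>
    intro A hA hchA ⟨x, h, hx1, hh1, hle⟩
    cases P' with
    | nil =>
      simp at hx1
      cases A with
      | nil => simp at hh1
      | cons a0 A' =>
        simp at hh1
        have hch : List.IsChain (· ≤ ·) (p :: a0 :: A') := by
          refine List.isChain_cons_cons.mpr ⟨?_, hchA⟩
          subst hx1 hh1; exact hle
        have : vstar ([p] ++ a0 :: A') = a0 :: A' := by
          simpa using vstar_of_chain hch
        rw [this]
        have : vstar [p] = [] := by
          have : List.IsChain (· ≤ ·) [p] := by simp
          simpa using vstar_of_chain this
        simp [this]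
    | cons q P'' =>
      have hx1' : (q :: P'').getLast? = some x := by simpa using hx1
      by_cases hch : List.IsChain (· ≤ ·) ((p :: q :: P'') ++ A)
      · rw [vstar_of_chain hch]
        have hchP : List.IsChain (· ≤ ·) (p :: q :: P'') :=
          (List.isChain_append.mp hch).1
        rw [vstar_of_chain hchP]
        simp
      · have hnchP : ¬ List.IsChain (· ≤ ·) (p :: q :: P'') := by
          intro hchP
          apply hch
          rw [List.isChain_append]
          refine ⟨hchP, hchA, ?_⟩
          intro x' hx' y' hy'
          rw [List.getLast?_cons_cons] at hx'
          rw [hx1'] at hx'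
          rw [hh1] at hy'
          simp at hx' hy'
          subst hx' hy'
          exact hle
        rw [List.cons_append, vstar_cons_of_not_chain (by simpa using hch),
          ih hA hchA ⟨x, h, hx1', hh1, hle⟩, vstar_cons_of_not_chain hnchP, List.cons_append]

theorem getLast_vstar_ge : ∀ (P : List α), vstar P ≠ [] →
    ∃ x x', P.getLast? = some x ∧ (vstar P).getLast? = some x' ∧ x ≤ x' := by
  intro P
  induction P with
  | nil => intro h; simp at h; exact absurd rfl h
  | cons p t ih =>
    intro hne
    cases t with
    | nil =>
      exfalso
      apply hne
      have : List.IsChain (· ≤ ·) [p] := by simp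
      simpa using vstar_of_chain this
    | cons q r =>
      by_cases hch : List.IsChain (· ≤ ·) (p :: q :: r)
      · rw [vstar_of_chain hch]
        simp only [List.tail_cons]
        obtain ⟨x, hx⟩ : ∃ x, (q :: r).getLast? = some x :=
          ⟨(q :: r).getLast (by simp), List.getLast?_eq_getLast _⟩
        exact ⟨x, x, by rw [List.getLast?_cons_cons]; exact hx, hx, le_rfl⟩
      · rw [vstar_cons_of_not_chain hch] at hne ⊢
        by_cases hvqr : vstar (q :: r) = []
        · have hr : r = [] := by
            have := length_vstar (q :: r)
            rw [hvqr] at this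
            simp at this
            exact List.eq_nil_of_length_eq_zero this.symm
          subst hr
          have hqp : q < p := by
            by_contra hle
            push_neg at hle
            exact hch (by simp [hle])
          rw [hvqr]
          exact ⟨q, p, by simp, by simp, le_of_lt hqp⟩
        · obtain ⟨x, x', hx, hx', hle⟩ := ih hvqr
          refine ⟨x, x', by rw [List.getLast?_cons_cons]; exact hx, ?_, hle⟩
          cases hv : vstar (q :: r) with
          | nil => exact absurd hv hvqr
          | cons y ys =>
            rw [List.getLast?_cons_cons]
            rw [hv] at hx'
            exact hx'

/-- condition under which the next deletion happens in the suffix part -/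
def Zcond (w u : List α) (d c : ℕ) : Prop :=
  vstar^[c] u ≠ [] ∧ (¬ List.IsChain (· ≤ ·) (vstar^[c] u) ∨ vstar^[d] w = [] ∨
    (∃ x h, (vstar^[d] w).getLast? = some x ∧ (vstar^[c] u).head? = some h ∧ h < x))

open Classical in
noncomputable def runState (w u : List α) : ℕ → ℕ × ℕ
  | 0 => (0, 0)
  | (l+1) =>
    let p := runState w u l
    if Zcond w u p.1 p.2 then (p.1, p.2 + 1) else (p.1 + 1, p.2)

theorem step_z {w u : List α} {d c : ℕ} (hz : Zcond w u d c) :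
    vstar (vstar^[d] w ++ vstar^[c] u) = vstar^[d] w ++ vstar^[c+1] u := by
  obtain ⟨hA, hdisj⟩ := hz
  rw [Function.iterate_succ_apply']
  rcases hdisj with h1 | h2 | h3
  · exact vstar_append_of_not_chain _ h1
  · rw [h2]; simp
  · by_cases hch : List.IsChain (· ≤ ·) (vstar^[c] u)
    · exact vstar_append_boundary _ hch h3
    · exact vstar_append_of_not_chain _ hch

theorem step_w {w u : List α} {d c : ℕ} (hz : ¬ Zcond w u d c) :
    vstar (vstar^[d] w ++ vstar^[c] u) = vstar^[d+1] w ++ vstar^[c] u := by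
  rw [Function.iterate_succ_apply']
  by_cases hA : vstar^[c] u = []
  · rw [hA]; simp
  · have hnd : ¬(¬ List.IsChain (· ≤ ·) (vstar^[c] u) ∨ vstar^[d] w = [] ∨
        (∃ x h, (vstar^[d] w).getLast? = some x ∧ (vstar^[c] u).head? = some h ∧ h < x)) :=
      fun hd => hz ⟨hA, hd⟩
    have hch : List.IsChain (· ≤ ·) (vstar^[c] u) := by
      by_contra hnc; exact hnd (Or.inl hnc)
    have hPne : vstar^[d] w ≠ [] := fun h0 => hnd (Or.inr (Or.inl h0))
    obtain ⟨x, hx⟩ : ∃ x, (vstar^[d] w).getLast? = some x :=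
      ⟨(vstar^[d] w).getLast hPne, List.getLast?_eq_getLast _⟩
    obtain ⟨h, hh⟩ : ∃ h, (vstar^[c] u).head? = some h := by
      cases hv : vstar^[c] u with
      | nil => exact absurd hv hA
      | cons y ys => exact ⟨y, rfl⟩
    refine vstar_append_w _ hA hch ⟨x, h, hx, hh, ?_⟩
    by_contra hlt
    push_neg at hlt
    exact hnd (Or.inr (Or.inr ⟨x, h, hx, hh, hlt⟩))

theorem run_inv (w u : List α) (l : ℕ) :
    (runState w u l).1 + (runState w u l).2 = l ∧
    vstar^[l] (w ++ u) = vstar^[(runState w u l).1] w ++ vstar^[(runState w u l).2] u ∧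
    (runState w u l).2 ≤ u.length ∧
    (vstar^[(runState w u l).1] w ≠ [] → 1 ≤ (runState w u l).2 →
      List.IsChain (· ≤ ·) (vstar^[(runState w u l).2 - 1] u) →
      ∃ x h, (vstar^[(runState w u l).1] w).getLast? = some x ∧
        (vstar^[(runState w u l).2 - 1] u).head? = some h ∧ h < x) := by
  induction l with
  | zero =>
    refine ⟨rfl, by simp [runState], by simp [runState], ?_⟩
    intro _ hc
    simp [runState] at hc
  | succ n ih =>
    obtain ⟨ihsum, iheq, ihle, ihinv⟩ := ih
    set d := (runState w u n).1 with hd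
    set c := (runState w u n).2 with hc
    by_cases hz : Zcond w u d c
    · have hrs : runState w u (n+1) = (d, c+1) := by
        rw [runState]
        simp only [← hd, ← hc]
        rw [if_pos hz]
      rw [hrs]
      dsimp only
      refine ⟨by omega, ?_, ?_, ?_⟩
      · rw [Function.iterate_succ_apply', iheq, step_z hz]
      · have : vstar^[c] u ≠ [] := hz.1
        have hlen := length_vstar_iter c u
        simp only [ne_eq, ← List.length_eq_zero_iff] at this
        omega
      · intro hPne _ hch
        simp only [Nat.add_sub_cancel]
        obtain ⟨hA, hdisj⟩ := hz
        rcases hdisj with h1 | h2 | h3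
        · exact absurd hch h1
        · exact absurd h2 hPne
        · exact h3
    · have hrs : runState w u (n+1) = (d+1, c) := by
        rw [runState]
        simp only [← hd, ← hc]
        rw [if_neg hz]
      rw [hrs]
      dsimp only
      refine ⟨by omega, ?_, ihle, ?_⟩
      · rw [Function.iterate_succ_apply', iheq, step_w hz]
      · intro hPne hc1 hch
        have hP : vstar^[d] w ≠ [] := by
          intro h0
          apply hPne
          show vstar^[d+1] w = []
          rw [Function.iterate_succ_apply' vstar d w, h0]
          rfl
        obtain ⟨x, h, hx, hh, hlt⟩ := ihinv hP hc1 hch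
        have hvne : vstar (vstar^[d] w) ≠ [] := by
          rw [← Function.iterate_succ_apply' vstar d w]
          exact hPne
        obtain ⟨x0, x', hx0, hx', hle⟩ := getLast_vstar_ge _ hvne
        rw [hx] at hx0
        refine ⟨x', h, ?_, hh, lt_of_lt_of_le hlt (by injection hx0 with e; exact e ▸ hle)⟩
        show (vstar^[d+1] w).getLast? = some x'
        rw [Function.iterate_succ_apply' vstar d w]
        exact hx'

theorem vstar_iter_nil (k : ℕ) : vstar^[k] ([] : List α) = [] :=
  Function.iterate_fixed rfl k

theorem vstar_iter_nil_of_le {l : List α} {k k' : ℕ} (h : vstar^[k] l = []) (hk : k ≤ k') :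
    vstar^[k'] l = [] := by
  obtain ⟨d, rfl⟩ := Nat.exists_eq_add_of_le hk
  rw [Nat.add_comm, Function.iterate_add_apply, h, vstar_iter_nil]

theorem vstar_iter_len_nil {l : List α} {k : ℕ} (h : l.length ≤ k) : vstar^[k] l = [] := by
  rw [← List.length_eq_zero_iff, length_vstar_iter]
  omega

theorem merge_min (u v : List α) (hu : u ≠ []) (hlen : u.length < v.length)
    (hbr : ¬ ∃ k, vstar^[k] v = u) :
    ∃ s t, vstar^[s+1] u = vstar^[t+1] v ∧
      (∀ s' t', vstar^[s'+1] u = vstar^[t'+1] v → s ≤ s' ∧ t ≤ t') ∧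
      vstar^[s] u ≠ [] ∧ vstar^[t] v ≠ [] ∧ vstar^[s] u ≠ vstar^[t] v := by
  classical
  have hune : 1 ≤ u.length := by
    cases u with | nil => exact absurd rfl hu | cons a t => simp
  have hex : ∃ s, ∃ t, vstar^[s+1] u = vstar^[t+1] v :=
    ⟨u.length - 1, v.length - 1, by
      rw [vstar_iter_len_nil (by omega), vstar_iter_len_nil (by omega)]⟩
  obtain ⟨s, ⟨t, hEQ⟩, hsmin⟩ :
      ∃ s, (∃ t, vstar^[s+1] u = vstar^[t+1] v) ∧
        ∀ m < s, ¬ ∃ t', vstar^[m+1] u = vstar^[t'+1] v :=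
    ⟨Nat.find hex, Nat.find_spec hex, fun m hm => Nat.find_min hex hm⟩
  have hex2 : ∃ t', vstar^[s+1] u = vstar^[t'+1] v := ⟨t, hEQ⟩
  clear hEQ t
  obtain ⟨t, hEQ, htmin⟩ :
      ∃ t, vstar^[s+1] u = vstar^[t+1] v ∧
        ∀ m < t, ¬ (vstar^[s+1] u = vstar^[m+1] v) :=
    ⟨Nat.find hex2, Nat.find_spec hex2, fun m hm => Nat.find_min hex2 hm⟩
  have hsmin' : ∀ s', (∃ t', vstar^[s'+1] u = vstar^[t'+1] v) → s ≤ s' := by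
    intro s' h'
    by_contra hlt
    exact hsmin s' (by omega) h'
  have htmin' : ∀ t', vstar^[s+1] u = vstar^[t'+1] v → t ≤ t' := by
    intro t' h'
    by_contra hlt
    exact htmin t' (by omega) h'
  have hmin : ∀ s' t', vstar^[s'+1] u = vstar^[t'+1] v → s ≤ s' ∧ t ≤ t' := by
    intro s' t' h'
    have hss : s ≤ s' := hsmin' s' ⟨t', h'⟩
    refine ⟨hss, ?_⟩
    have key : vstar^[s'+1] u = vstar^[(s'-s)+(t+1)] v := by
      have h2 := congrArg (vstar^[s'-s]) hEQ
      rw [← Function.iterate_add_apply, ← Function.iterate_add_apply] at h2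
      have e : s' - s + (s+1) = s' + 1 := by omega
      rw [e] at h2
      exact h2
    have hYY : vstar^[t'+1] v = vstar^[(s'-s)+(t+1)] v := by rw [← h', key]
    by_cases hY : vstar^[t'+1] v = []
    · by_contra hltt
      push_neg at hltt
      have hl := length_vstar_iter (t'+1) v
      rw [hY] at hl
      simp at hl
      have ht1 : vstar^[t+1] v = [] := vstar_iter_len_nil (by omega)
      exact htmin t' hltt (by rw [hEQ, ht1, hY])
    · have h1 : v.length - (t'+1) = v.length - ((s'-s)+(t+1)) := by
        rw [← length_vstar_iter, ← length_vstar_iter, hYY]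
      have h3 : (vstar^[t'+1] v).length ≠ 0 := by
        rw [ne_eq, List.length_eq_zero_iff]
        exact hY
      rw [length_vstar_iter] at h3
      omega
  have hS : vstar^[s] u ≠ [] := by
    rcases Nat.eq_zero_or_pos s with hs0 | hs1
    · rw [hs0]; simpa using hu
    · intro h0
      have h1 : vstar^[(s-1)+1] u = vstar^[(v.length-1)+1] v := by
        have e : s - 1 + 1 = s := by omega
        rw [e, h0, vstar_iter_len_nil (show v.length ≤ v.length - 1 + 1 by omega)]
      have := hsmin' (s-1) ⟨v.length - 1, h1⟩
      omega
  have hT : vstar^[t] v ≠ [] := by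
    rcases Nat.eq_zero_or_pos t with ht0 | ht1
    · rw [ht0]
      intro h0
      simp at h0
      rw [h0] at hlen
      simp at hlen
    · intro h0
      have h1 : vstar^[s+1] u = vstar^[(t-1)+1] v := by
        have e : t - 1 + 1 = t := by omega
        rw [e, h0, hEQ, vstar_iter_nil_of_le h0 (by omega)]
      have := htmin' (t-1) h1
      omega
  have hST : vstar^[s] u ≠ vstar^[t] v := by
    intro heq
    rcases Nat.eq_zero_or_pos s with hs0 | hs1
    · rw [hs0] at heq
      simp at heq
      exact hbr ⟨t, heq.symm⟩
    · rcases Nat.eq_zero_or_pos t with ht0 | ht1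
      · rw [ht0] at heq
        simp at heq
        have hl := length_vstar_iter s u
        rw [heq] at hl
        omega
      · have h1 : vstar^[(s-1)+1] u = vstar^[(t-1)+1] v := by
          have e1 : s - 1 + 1 = s := by omega
          have e2 : t - 1 + 1 = t := by omega
          rw [e1, e2, heq]
        have := hsmin' (s-1) ⟨t-1, h1⟩
        omega
  exact ⟨s, t, hEQ, hmin, hS, hT, hST⟩

theorem vpos_spec : ∀ (S : List α), ¬ List.IsChain (· ≤ ·) S →
    ∃ p a b, 1 ≤ p ∧ p < S.length ∧ vstar S = S.take p ++ S.drop (p+1) ∧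
      S[p-1]? = some b ∧ S[p]? = some a ∧ a < b := by
  intro S
  induction S with
  | nil => intro h; simp at h
  | cons x t ih =>
    intro hnc
    by_cases hct : List.IsChain (· ≤ ·) t
    · obtain ⟨b0, t', ht', hlt⟩ := head_lt_of_not_chain hnc hct
      subst ht'
      refine ⟨1, b0, x, le_rfl, by simp, ?_, by simp, by simp, hlt⟩
      rw [vstar_cons_of_not_chain hnc, vstar_of_chain hct]
      simp
    · obtain ⟨p', a, b, hp1, hplt, hvt, hgb, hga, hab⟩ := ih hct
      refine ⟨p'+1, a, b, by omega, by simp; omega, ?_, ?_, ?_, hab⟩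
      · rw [vstar_cons_of_not_chain hnc, hvt]
        simp
      · have e : p' + 1 - 1 = (p' - 1) + 1 := by omega
        rw [e, List.getElem?_cons_succ]
        exact hgb
      · rw [List.getElem?_cons_succ]
        exact hga

theorem coincidence_contra {u P : List α} {s c' : ℕ}
    (hXeq : vstar^[s+1] u = P ++ vstar^[c'] u)
    (hPne : P ≠ [])
    (hc'le : c' ≤ u.length)
    (hinv : List.IsChain (· ≤ ·) (vstar^[c'-1] u) →
      ∃ x h, P.getLast? = some x ∧ (vstar^[c'-1] u).head? = some h ∧ h < x) : False := by
  have hPlen : 1 ≤ P.length := by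
    cases P with | nil => exact absurd rfl hPne | cons a b => simp
  have hXlen := length_vstar_iter (s+1) u
  have hAlen := length_vstar_iter c' u
  have hXlen2 : (vstar^[s+1] u).length = P.length + (vstar^[c'] u).length := by
    rw [hXeq]; simp
  have hsu : s + 1 < u.length := by omega
  have hc' : c' = s + 1 + P.length := by omega
  set y := vstar^[s+1] u with hydef
  have hdrop : y.drop P.length = vstar^[c'] u := by
    rw [hXeq, List.drop_left]
  have hit : vstar^[P.length] y = vstar^[c'] u := by
    rw [hydef, ← Function.iterate_add_apply]
    congr 1
    omega
  obtain ⟨m, hm⟩ : ∃ m, P.length = m + 1 := ⟨P.length - 1, by omega⟩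
  have hF : List.IsChain (· ≤ ·) (vstar^[m] y) := by
    apply (vstar_EF y).1 m
    rw [← hm, hit, ← hdrop, hm]
  have hmy : vstar^[m] y = vstar^[c'-1] u := by
    rw [hydef, ← Function.iterate_add_apply]
    congr 1
    omega
  obtain ⟨x, h, hx, hh, hlt⟩ := hinv (hmy ▸ hF)
  -- shape : vstar^[m] y = h :: y.drop (m+1)
  have hshape : vstar^[m] y = h :: y.drop (m+1) := by
    rw [hmy]
    cases hA : vstar^[c'-1] u with
    | nil => rw [hA] at hh; simp at hh
    | cons z zs =>
      rw [hA] at hh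
      simp at hh
      subst hh
      congr 1
      have htail : vstar (vstar^[c'-1] u) = vstar^[c'] u := by
        rw [← Function.iterate_succ_apply' vstar (c'-1) u]
        congr 1
        omega
      rw [vstar_of_chain (hmy ▸ hF), hA] at htail
      simp at htail
      rw [htail, ← hdrop, hm]
  have hmlt : m < y.length := by omega
  have hE := (vstar_EF y).2 m h hF hshape hmlt
  -- y[m] = getLast P = x
  have hmP : m < P.length := by omega
  have h1 : y[m]? = P[m]? := by
    rw [hXeq, List.getElem?_append, if_pos hmP]
  have h2 : P[m]? = some x := by
    rw [← hx, List.getLast?_eq_getElem?]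
    congr 1
    omega
  have h3 : y[m]? = some (y[m]'hmlt) := List.getElem?_eq_getElem hmlt
  rw [h1, h2] at h3
  injection h3 with h3
  rw [← h3] at hE
  exact absurd hE (not_le.mpr hlt)

/-- V-order `≺` between distinct strings `x`, `y`: either `x` lies on the path
`y, y*, y^{2*}, …, ε`, or (if neither lies on the path of the other) taking the
least `s, t` with `x^{(s+1)*} = y^{(t+1)*}` and the greatest position `j` at
which `s = x^{s*}` and `t = y^{t*}` differ, the letter of `x^{s*}` at `j` is
smaller than that of `y^{t*}`. -/
def VLess (x y : List α) : Prop :=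
  (∃ k : ℕ, 0 < k ∧ vstar^[k] y = x) ∨
  ((¬ ∃ k : ℕ, vstar^[k] y = x) ∧ (¬ ∃ k : ℕ, vstar^[k] x = y) ∧
    ∃ s t : ℕ,
      vstar^[s + 1] x = vstar^[t + 1] y ∧
      (∀ s' t' : ℕ, vstar^[s' + 1] x = vstar^[t' + 1] y → s ≤ s' ∧ t ≤ t') ∧
      ∃ j : ℕ, j < (vstar^[s] x).length ∧
        (∀ j' : ℕ, j < j' → (vstar^[s] x)[j']? = (vstar^[t] y)[j']?) ∧
        ∃ a b : α, (vstar^[s] x)[j]? = some a ∧ (vstar^[t] y)[j]? = some b ∧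
          a < b)

theorem vless_suffix (u w : List α) (hu : u ≠ []) (hw : w ≠ []) : VLess u (w ++ u) := by
  have hulen : 1 ≤ u.length := by
    cases u with | nil => exact absurd rfl hu | cons a t => simp
  have hwlen : 1 ≤ w.length := by
    cases w with | nil => exact absurd rfl hw | cons a t => simp
  have hlen : u.length < (w ++ u).length := by simp; omega
  by_cases hbr : ∃ k, vstar^[k] (w ++ u) = u
  · left
    obtain ⟨k, hk⟩ := hbr
    refine ⟨k, ?_, hk⟩
    rcases Nat.eq_zero_or_pos k with rfl | h
    · simp at hk
      rw [hk] at hlen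
      simp at hlen
    · exact h
  · right
    refine ⟨hbr, ?_, ?_⟩
    · rintro ⟨k, hk⟩
      have h1 := length_vstar_iter k u
      rw [hk] at h1
      omega
    · obtain ⟨s, t, hEQ, hmin, hS, hT, hST⟩ := merge_min u (w ++ u) hu hlen hbr
      refine ⟨s, t, hEQ, hmin, ?_⟩
      have hvS : vstar (vstar^[s] u) = vstar^[s+1] u :=
        (Function.iterate_succ_apply' vstar s u).symm
      have hvT : vstar (vstar^[t] (w ++ u)) = vstar^[s+1] u := by
        rw [Function.iterate_succ_apply' vstar t (w ++ u)] at hEQ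
        exact hEQ.symm
      have hSlen := length_vstar_iter s u
      have hTlen := length_vstar_iter t (w ++ u)
      have hXlen := length_vstar_iter (s+1) u
      have hSne : (vstar^[s] u).length ≠ 0 := fun h0 => hS (List.length_eq_zero_iff.mp h0)
      have hTne : (vstar^[t] (w ++ u)).length ≠ 0 := fun h0 => hT (List.length_eq_zero_iff.mp h0)
      have hSTlen : (vstar^[s] u).length = (vstar^[t] (w ++ u)).length := by
        have h1 := length_vstar (vstar^[s] u)
        have h2 := length_vstar (vstar^[t] (w ++ u))
        rw [hvS] at h1
        rw [hvT] at h2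
        omega
      obtain ⟨hsum, heq, hcle, hinv⟩ := run_inv w u t
      obtain ⟨hsum', heq', hcle', hinv'⟩ := run_inv w u (t+1)
      rcases hrt : runState w u t with ⟨d, c⟩
      rw [hrt] at hsum heq hcle hinv
      dsimp only at hsum heq hcle hinv
      by_cases hz : Zcond w u d c
      · -- Z-step
        exfalso
        have hrt1 : runState w u (t+1) = (d, c+1) := by
          rw [runState, hrt]
          dsimp only
          rw [if_pos hz]
        rw [hrt1] at hsum' heq' hcle' hinv'
        dsimp only at hsum' heq' hcle' hinv'
        by_cases hPd : vstar^[d] w = []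
        · -- T = A_c, so T = S : contra
          rw [hPd] at heq
          simp at heq
          have hAc := length_vstar_iter c u
          rw [← heq] at hAc
          have hcs : c = s := by omega
          rw [hcs] at heq
          exact hST (heq.symm)
        · exact coincidence_contra (P := vstar^[d] w) (c' := c+1)
            (by rw [hEQ, heq']) hPd hcle'
            (fun hch => hinv' hPd (by omega) (by simpa using hch))
      · -- W-step
        have hrt1 : runState w u (t+1) = (d+1, c) := by
          rw [runState, hrt]
          dsimp only
          rw [if_neg hz]
        rw [hrt1] at hsum' heq' hcle' hinv'
        dsimp only at hsum' heq' hcle' hinv'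
        by_cases hP' : vstar^[d+1] w = []
        · -- merge
          have hXA : vstar^[s+1] u = vstar^[c] u := by
            rw [hEQ, heq', hP']
            simp
          by_cases hPd : vstar^[d] w = []
          · exfalso
            rw [hPd] at heq
            simp at heq
            have hTX : vstar^[t] (w ++ u) = vstar^[s+1] u := by rw [heq, ← hXA]
            have h1 := length_vstar (vstar^[t] (w ++ u))
            rw [hvT, ← hTX] at h1
            omega
          · have hPd1 : (vstar^[d] w).length = 1 := by
              have h1 := length_vstar (vstar^[d] w)
              have h2 : vstar (vstar^[d] w) = vstar^[d+1] w :=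
                (Function.iterate_succ_apply' vstar d w).symm
              rw [h2, hP'] at h1
              simp at h1
              have : (vstar^[d] w).length ≠ 0 := fun h0 => hPd (List.length_eq_zero_iff.mp h0)
              omega
            obtain ⟨b, hb⟩ : ∃ b, vstar^[d] w = [b] := by
              cases hv : vstar^[d] w with
              | nil => exact absurd hv hPd
              | cons b r =>
                rw [hv] at hPd1
                simp at hPd1
                exact ⟨b, by simp [hv, hPd1]⟩
            have hAclen := length_vstar_iter c u
            have hc : c = s + 1 := by
              have h1 : (vstar^[s+1] u).length = (vstar^[c] u).length := by rw [hXA]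
              rw [hXlen, hAclen] at h1
              by_cases hXnil : vstar^[s+1] u = []
              · have h2 : vstar^[c] u = [] := by rw [← hXA, hXnil]
                have h3 := length_vstar_iter c u
                rw [h2] at h3
                have h4 := hXlen
                rw [hXnil] at h4
                simp at h3 h4
                omega
              · have h2 : (vstar^[s+1] u).length ≠ 0 :=
                  fun h0 => hXnil (List.length_eq_zero_iff.mp h0)
                rw [hXlen] at h2
                omega
            have hTb : vstar^[t] (w ++ u) = b :: vstar^[s+1] u := by
              rw [heq, hb, ← hXA]
              simp
            by_cases hchS : List.IsChain (· ≤ ·) (vstar^[s] u)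
            · -- head comparison at j = 0
              obtain ⟨x, h, hx, hh, hlt⟩ := hinv hPd (by omega)
                (by rw [show c - 1 = s by omega]; exact hchS)
              rw [hb] at hx
              simp at hx
              rw [show c - 1 = s by omega] at hh
              subst hx
              have hXtail : vstar^[s+1] u = (vstar^[s] u).tail := by
                rw [← hvS, vstar_of_chain hchS]
              refine ⟨0, by omega, ?_, h, b, ?_, ?_, hlt⟩
              · intro j' hj'
                obtain ⟨i, rfl⟩ : ∃ i, j' = i + 1 := ⟨j' - 1, by omega⟩
                rw [hTb, List.getElem?_cons_succ, hXtail, List.getElem?_tail]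
              · rw [← List.head?_eq_getElem?]
                exact hh
              · rw [hTb]
                simp
            · obtain ⟨p, a2, b2, hp1, hplt, hvposS, hgb2, hga2, hab⟩ := vpos_spec _ hchS
              have hXer : vstar^[s+1] u = (vstar^[s] u).take p ++ (vstar^[s] u).drop (p+1) := by
                rw [← hvS, hvposS]
              have htklen : ((vstar^[s] u).take p).length = p := by
                rw [List.length_take]
                omega
              refine ⟨p, hplt, ?_, a2, b2, hga2, ?_, hab⟩
              · intro j' hj'
                obtain ⟨i, rfl⟩ : ∃ i, j' = i + 1 := ⟨j' - 1, by omega⟩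
                rw [hTb, List.getElem?_cons_succ, hXer, List.getElem?_append, htklen,
                  if_neg (by omega), List.getElem?_drop]
                congr 1
                omega
              · obtain ⟨i, hpi⟩ : ∃ i, p = i + 1 := ⟨p - 1, by omega⟩
                rw [hTb, hpi, List.getElem?_cons_succ, hXer, List.getElem?_append, htklen,
                  if_pos (by omega), List.getElem?_take, if_pos (by omega), ← hgb2]
                congr 1
                omega
        · -- coincidence with P' = vstar^[d+1] w
          exfalso
          have hXeq2 : vstar^[s+1] u = vstar^[d+1] w ++ vstar^[c] u := by
            rw [hEQ, heq']
          have hP'len : 1 ≤ (vstar^[d+1] w).length := by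
            cases hv : vstar^[d+1] w with
            | nil => exact absurd hv hP'
            | cons a r => simp
          have hc1 : 1 ≤ c := by
            by_contra hc0
            push_neg at hc0
            interval_cases c
            have h1 := congrArg List.length hXeq2
            rw [hXlen] at h1
            simp at h1
            omega
          exact coincidence_contra (P := vstar^[d+1] w) (c' := c)
            hXeq2 hP' hcle'
            (fun hch => hinv' hP' hc1 hch)

/-- The suffixes of any string are totally V-ordered by increasing length:
for `1 ≤ i < j ≤ n`, the suffix `x[j..n]` precedes the suffix `x[i..n]`
in V-order; in particular `x[n] ≺ x[n-1..n] ≺ ⋯ ≺ x`. -/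
theorem vless_suffixes_ordered {α : Type*} [LinearOrder α]
    (x : List α) (i j : ℕ) (hi : 1 ≤ i) (hij : i < j) (hj : j ≤ x.length) :
    VLess (x.drop (j - 1)) (x.drop (i - 1)) := by
  set v := x.drop (i - 1) with hv
  have hm : x.drop (j - 1) = v.drop (j - i) := by
    rw [hv, List.drop_drop]
    congr 1
    omega
  have hvlen : v.length = x.length - (i - 1) := by rw [hv, List.length_drop]
  have hu : v.drop (j - i) ≠ [] := by
    have : (v.drop (j - i)).length = v.length - (j - i) := List.length_drop
    intro h0
    rw [h0] at this
    simp at this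
    omega
  have hw : v.take (j - i) ≠ [] := by
    rw [ne_eq, List.take_eq_nil_iff]
    push_neg
    constructor
    · omega
    · intro h0
      rw [h0] at hvlen
      simp at hvlen
      omega
  have hmain := vless_suffix (v.drop (j - i)) (v.take (j - i)) hu hw
  rw [List.take_append_drop] at hmain
  rw [hm]
  exact hmain
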